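/- arXiv:1808.00352 — 3 statements merged into one kernel-verified Lean document; each statement's English description precedes it below -/
import Mathlib

section
/- For every integer ℓ with 0 ≤ ℓ < g and any two vertices u and v of G having the same degree, the number of closed walks of length ℓ based at u equals the number of closed walks of length ℓ based at v. (Note that every closed walk of length ℓ < g is automatically cycle-free, since its traversed-edge subgraph has fewer than g edges and hence contains no cycle.) -/
open SimpleGraph Walk

/-- Tree walk count. -/
def FF (c d : ℕ) : ℕ → ℕ → ℕ → ℕ
  | _, _, 0 => 1
  | e, r, (m+1) => ∑ t ∈ (Finset.Icc 2 (m+1)).attach,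
      r * FF c d (c+d-e) (c+d-e-1) (t.1 - 2) * FF c d e r (m+1-t.1)
  termination_by e r m => m
  decreasing_by
  · have := (Finset.mem_Icc.mp t.2).2
    have h2 := (Finset.mem_Icc.mp t.2).1
    omega
  · have h2 := (Finset.mem_Icc.mp t.2).1
    omega

section Graph

variable {V : Type*} [DecidableEq V] {G : SimpleGraph V}

lemma girth_le_length {a : V} {w : G.Walk a a} (hw : w.IsCycle) :
    G.girth ≤ w.length := by
  have h : G.egirth ≤ (w.length : ℕ∞) := le_egirth.mp le_rfl a w hw
  simpa [SimpleGraph.girth] using ENat.toNat_le_toNat h (by simp)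

/-- Two distinct neighbors `a b` of `v` cannot be connected by a short walk avoiding `v`. -/
lemma girth_le_of_walk {v a b : V} (hva : G.Adj v a) (hvb : G.Adj v b) (hab : a ≠ b)
    (w : G.Walk a b) (hv : v ∉ w.support) : G.girth ≤ w.length + 2 := by
  have hvP : v ∉ w.bypass.support := fun h => hv (w.support_bypass_subset h)
  set P := w.bypass with hPdef
  have hP : P.IsPath := w.bypass_isPath
  have hQ : (P.append (Walk.cons hvb.symm Walk.nil)).IsPath := by
    rw [Walk.isPath_def, Walk.support_append]
    simp only [Walk.support_cons, Walk.support_nil, List.tail_cons]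
    rw [List.nodup_append]
    refine ⟨hP.support_nodup, List.nodup_singleton v, ?_⟩
    intro x hx y h hxy
    rw [List.mem_singleton] at h
    rw [h] at hxy
    subst hxy
    exact hvP hx
  have hne : ¬ s(v, a) ∈ (P.append (Walk.cons hvb.symm Walk.nil)).edges := by
    rw [Walk.edges_append]
    simp only [Walk.edges_cons, Walk.edges_nil, List.mem_append, List.mem_singleton]
    rintro (h | h)
    · exact hvP (P.fst_mem_support_of_mem_edges h)
    · rw [Sym2.eq_iff] at h
      rcases h with ⟨h1, h2⟩ | ⟨h1, h2⟩
      · exact hvb.ne h1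
      · exact hab h2
  have hcyc : (Walk.cons hva (P.append (Walk.cons hvb.symm Walk.nil))).IsCycle :=
    SimpleGraph.Path.cons_isCycle ⟨_, hQ⟩ hva hne
  have := _root_.girth_le_length hcyc
  simp only [Walk.length_cons, Walk.length_append, Walk.length_nil] at this
  have hlb := w.length_bypass_le
  rw [← hPdef] at hlb
  omega

lemma girth_le_of_mem_support {v x y w : V} (hvx : G.Adj v x) (hvw : G.Adj v w) (hxw : x ≠ w)
    (mid : G.Walk x y) (hv : v ∉ mid.support) (hw : w ∈ mid.support) :
    G.girth ≤ mid.length + 2 := by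
  have h1 := girth_le_of_walk hvx hvw hxw (mid.takeUntil w hw)
    (fun hmem => hv (mid.support_takeUntil_subset hw hmem))
  have h2 := mid.length_takeUntil_le hw
  omega

lemma eq_nil_of_count_eq_one {v : V} (a : G.Walk v v) (ha : a.support.count v = 1) :
    a = Walk.nil := by
  cases a with
  | nil => rfl
  | cons h c =>
    exfalso
    have h1 : v ∈ c.support := c.end_mem_support
    have h2 : 1 ≤ c.support.count v := List.count_pos_iff.mpr h1
    simp only [Walk.support_cons, List.count_cons_self] at ha
    omega

lemma append_cancel_of_count_one {x v : V} (a : G.Walk x v) :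
    ∀ (a' : G.Walk x v) (b b' : G.Walk v v),
    a.append b = a'.append b' → a.support.count v = 1 → a'.support.count v = 1 →
    a = a' ∧ b = b' := by
  induction a with
  | nil =>
    intro a' b b' heq h1 h2
    have := eq_nil_of_count_eq_one a' h2
    subst this
    exact ⟨rfl, heq⟩
  | @cons x y v h c ih =>
    intro a' b b' heq h1 h2
    have hxv : x ≠ v := by
      intro hx
      subst hx
      have h2' : 1 ≤ c.support.count x := List.count_pos_iff.mpr c.end_mem_support
      simp only [Walk.support_cons, List.count_cons_self] at h1
      omega
    cases a' with
    | nil => exact absurd rfl hxv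
    | @cons _ y' _ h' c' =>
      rw [Walk.cons_append, Walk.cons_append, Walk.cons.injEq] at heq
      have hy : y = y' := heq.1
      subst hy
      have heq3 := heq.2
      have heq3' : c.append b = c'.append b' := eq_of_heq heq3
      have hc1 : c.support.count v = 1 := by
        simpa [Walk.support_cons, List.count_cons, hxv] using h1
      have hc2 : c'.support.count v = 1 := by
        simpa [Walk.support_cons, List.count_cons, hxv] using h2
      obtain ⟨rfl, hb⟩ := ih c' b b' heq3' hc1 hc2
      exact ⟨rfl, hb⟩

variable [Fintype V] [DecidableRel G.Adj]

/-- Closed walks of length `m` based at `v` avoiding an optional forbidden vertex. -/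
abbrev WalkSub (G : SimpleGraph V) (v : V) (o : Option V) (m : ℕ) : Type _ :=
  {p : G.Walk v v // p.length = m ∧ ∀ w ∈ o, w ∉ p.support}

instance walkSubFinite (v : V) (o : Option V) (m : ℕ) : Finite (WalkSub G v o m) := by
  have hinj : Function.Injective
      (fun q : WalkSub G v o m => (⟨q.1, q.2.1⟩ : {p : G.Walk v v // p.length = m})) := by
    intro a b h
    simp only [Subtype.mk.injEq] at h
    exact Subtype.ext h
  exact Finite.of_injective _ hinj

/-- Number of closed walks of length `m` based at `v` avoiding `o`. -/
noncomputable def cnt (G : SimpleGraph V) [DecidableRel G.Adj] (v : V) (o : Option V)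
    (m : ℕ) : ℕ :=
  Nat.card (WalkSub G v o m)

lemma nat_card_sigma {ι : Type*} [Fintype ι] (f : ι → Type*) [∀ i, Finite (f i)] :
    Nat.card (Σ i, f i) = ∑ i, Nat.card (f i) := by
  letI : ∀ i, Fintype (f i) := fun i => Fintype.ofFinite _
  simp [Nat.card_eq_fintype_card, Fintype.card_sigma]

end Graph

section Graph2

open SimpleGraph Walk

variable {V : Type*} [DecidableEq V] [Fintype V] {G : SimpleGraph V} [DecidableRel G.Adj]

/-- Glue a first-return excursion and a remaining closed walk into a closed walk. -/
def glueWalk {v x : V} (h : G.Adj v x) (mid : G.Walk x x) (tail : G.Walk v v) : G.Walk v v :=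
  Walk.cons h ((mid.append (Walk.cons h.symm Walk.nil)).append tail)

set_option maxHeartbeats 2000000 in
lemma cnt_rec {g : ℕ} (hg : G.girth = g) {m : ℕ} (hm1 : 1 ≤ m) (hmg : m < g)
    (v : V) (o : Option V) (ho : ∀ w ∈ o, G.Adj v w) :
    cnt G v o m = ∑ t ∈ Finset.Icc 2 m,
      ∑ x ∈ (G.neighborFinset v).filter (fun x => ∀ w ∈ o, x ≠ w),
        cnt G x (some v) (t - 2) * cnt G v o (m - t) := by
  classical
  set s : Finset V := (G.neighborFinset v).filter (fun x => ∀ w ∈ o, x ≠ w) with hs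
  have hadj : ∀ x : s, G.Adj v x.1 := fun x =>
    (G.mem_neighborFinset v x.1).mp (Finset.mem_filter.mp x.2).1
  have hxo : ∀ (x : s) (w : V), w ∈ o → x.1 ≠ w := fun x => (Finset.mem_filter.mp x.2).2
  let D := Σ (t : (Finset.Icc 2 m : Finset ℕ)) (x : s),
    (WalkSub G x.1 (some v) (t.1 - 2)) × (WalkSub G v o (m - t.1))
  have hprop : ∀ z : D, (glueWalk (hadj z.2.1) z.2.2.1.1 z.2.2.2.1).length = m ∧
      ∀ w ∈ o, w ∉ (glueWalk (hadj z.2.1) z.2.2.1.1 z.2.2.2.1).support := by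
    rintro ⟨⟨t, ht⟩, ⟨x, hxs⟩, ⟨mid, hmidlen, hmidav⟩, ⟨tail, htaillen, htailav⟩⟩
    obtain ⟨ht2, htm⟩ := Finset.mem_Icc.mp ht
    have hml : mid.length = t - 2 := hmidlen
    have htl : tail.length = m - t := htaillen
    have hvx : G.Adj v x := hadj ⟨x, hxs⟩
    have hvmid : v ∉ mid.support := hmidav v rfl
    constructor
    · simp only [glueWalk, Walk.length_cons, Walk.length_append, Walk.length_nil]
      omega
    · intro w hw
      have hvw : G.Adj v w := ho w hw
      have hxw : x ≠ w := hxo ⟨x, hxs⟩ w hw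
      simp only [glueWalk, Walk.support_cons, List.mem_cons, Walk.mem_support_append_iff]
      push_neg
      refine ⟨hvw.ne', ⟨?_, ?_⟩, ?_⟩
      · intro hwmid
        have := girth_le_of_mem_support hvx hvw hxw mid hvmid hwmid
        rw [hg] at this
        omega
      · refine ⟨fun hh => hxw hh.symm, ?_⟩
        simp only [Walk.support_nil, List.mem_singleton]
        exact hvw.ne'
      · exact htailav w hw
  let f : D → WalkSub G v o m := fun z =>
    ⟨glueWalk (hadj z.2.1) z.2.2.1.1 z.2.2.2.1, hprop z⟩
  have hbij : Function.Bijective f := by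
    constructor
    · rintro ⟨⟨t, ht⟩, ⟨x, hxs⟩, ⟨mid, hmidlen, hmidav⟩, ⟨tail, htaillen, htailav⟩⟩
        ⟨⟨t', ht'⟩, ⟨x', hxs'⟩, ⟨mid', hmidlen', hmidav'⟩, ⟨tail', htaillen', htailav'⟩⟩ heq
      have heqv : glueWalk (hadj ⟨x, hxs⟩) mid tail = glueWalk (hadj ⟨x', hxs'⟩) mid' tail' :=
        congrArg Subtype.val heq
      simp only [glueWalk] at heqv
      rw [Walk.cons.injEq] at heqv
      obtain ⟨hxx, hAB⟩ := heqv
      subst hxx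
      have hAB' : (mid.append (Walk.cons (hadj ⟨x, hxs⟩).symm Walk.nil)).append tail =
          (mid'.append (Walk.cons (hadj ⟨x, hxs⟩).symm Walk.nil)).append tail' :=
        eq_of_heq hAB
      have hcount : ∀ (mm : G.Walk x x), v ∉ mm.support →
          (mm.append (Walk.cons (hadj ⟨x, hxs⟩).symm Walk.nil)).support.count v = 1 := by
        intro mm hmm
        rw [Walk.support_append]
        simp only [Walk.support_cons, Walk.support_nil, List.tail_cons]
        rw [List.count_append, List.count_eq_zero_of_not_mem hmm]
        simp
      obtain ⟨hA, hT⟩ := append_cancel_of_count_one _ _ _ _ hAB'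
        (hcount mid (hmidav v rfl)) (hcount mid' (hmidav' v rfl))
      have hmm : mid = mid' := by
        have h0 := congrArg Walk.reverse hA
        simp only [Walk.reverse_append, Walk.reverse_cons, Walk.reverse_nil,
          Walk.nil_append, Walk.cons_append] at h0
        rw [Walk.cons.injEq] at h0
        have h2 := eq_of_heq h0.2
        have h3 := congrArg Walk.reverse h2
        simpa using h3
      subst hmm
      subst hT
      have hb1 := Finset.mem_Icc.mp ht
      have hb2 := Finset.mem_Icc.mp ht'
      have e3 : mid.length = t - 2 := hmidlen
      have e4 : mid.length = t' - 2 := hmidlen'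
      have htt : t = t' := by omega
      subst htt
      rfl
    · rintro ⟨p, hplen, hpav⟩
      cases p with
      | nil =>
        exfalso
        simp only [Walk.length_nil] at hplen
        omega
      | @cons _ x₀ _ h q =>
        have hx0v : x₀ ≠ v := h.ne'
        have hqlen : q.length + 1 = m := by simpa using hplen
        have hvq : v ∈ q.support := q.end_mem_support
        have hspec := q.take_spec hvq
        have hcount := q.count_support_takeUntil_eq_one hvq
        have hq1len : (q.takeUntil v hvq).length ≤ q.length := q.length_takeUntil_le hvq
        have hq1pos : 0 < (q.takeUntil v hvq).length := by
          rw [← Walk.not_nil_iff_lt_length]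
          exact Walk.not_nil_of_ne hx0v
        obtain ⟨x₂, h₂, sw, hsw⟩ : ∃ (x₂ : V) (h₂ : G.Adj x₂ v) (sw : G.Walk x₀ x₂),
            q.takeUntil v hvq = sw.concat h₂ := by
          cases hrev : (q.takeUntil v hvq).reverse with
          | nil =>
            exfalso
            have h5 := congrArg Walk.length hrev
            rw [Walk.length_reverse] at h5
            simp only [Walk.length_nil] at h5
            omega
          | @cons _ y _ h₂ sw =>
            refine ⟨y, h₂.symm, sw.reverse, ?_⟩
            have h5 := congrArg Walk.reverse hrev
            rw [Walk.reverse_reverse] at h5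
            rw [h5, Walk.reverse_cons, Walk.concat_eq_append]
        have hswlen : (q.takeUntil v hvq).length = sw.length + 1 := by
          rw [hsw, Walk.length_concat]
        have hvsw : v ∉ sw.support := by
          intro hmem
          rw [hsw, Walk.concat_eq_append, Walk.support_append] at hcount
          simp only [Walk.support_cons, Walk.support_nil, List.tail_cons] at hcount
          rw [List.count_append] at hcount
          have hpos : 0 < sw.support.count v := List.count_pos_iff.mpr hmem
          have hone : List.count v [v] = 1 := by simp
          omega
        have hx2 : x₂ = x₀ := by
          by_contra hne
          have hgl := girth_le_of_walk h h₂.symm (fun hh => hne hh.symm) sw hvsw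
          rw [hg] at hgl
          omega
        subst hx2
        have hdroplen : (q.dropUntil v hvq).length = m - (sw.length + 2) := by
          have h6 := congrArg Walk.length hspec
          rw [Walk.length_append] at h6
          omega
        have ht : sw.length + 2 ∈ Finset.Icc 2 m := Finset.mem_Icc.mpr ⟨by omega, by omega⟩
        have hxs : x₂ ∈ s := by
          rw [hs]
          refine Finset.mem_filter.mpr ⟨(G.mem_neighborFinset v x₂).mpr h, ?_⟩
          intro w hw hxw
          subst hxw
          exact hpav _ hw (by
            rw [Walk.support_cons]
            exact List.mem_cons_of_mem _ q.start_mem_support)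
        have hmidpf : sw.length = (sw.length + 2) - 2 ∧
            ∀ w ∈ (some v : Option V), w ∉ sw.support := by
          refine ⟨by omega, ?_⟩
          intro w hw
          rw [Option.mem_def, Option.some.injEq] at hw
          subst hw
          exact hvsw
        have htailpf : (q.dropUntil v hvq).length = m - (sw.length + 2) ∧
            ∀ w ∈ o, w ∉ (q.dropUntil v hvq).support := by
          refine ⟨hdroplen, ?_⟩
          intro w hw hmem
          exact hpav w hw (by
            rw [Walk.support_cons]
            exact List.mem_cons_of_mem _ (q.support_dropUntil_subset hvq hmem))
        refine ⟨⟨⟨sw.length + 2, ht⟩, ⟨x₂, hxs⟩, ⟨sw, hmidpf⟩,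
          ⟨q.dropUntil v hvq, htailpf⟩⟩, ?_⟩
        apply Subtype.ext
        show glueWalk (hadj ⟨x₂, hxs⟩) sw (q.dropUntil v hvq) = Walk.cons h q
        have hXq : (sw.append (Walk.cons (hadj ⟨x₂, hxs⟩).symm Walk.nil)).append
            (q.dropUntil v hvq) = q := by
          have e1 : sw.append (Walk.cons (hadj ⟨x₂, hxs⟩).symm Walk.nil) =
              q.takeUntil v hvq := by
            rw [hsw, Walk.concat_eq_append]
          rw [e1, hspec]
        simp only [glueWalk]
        exact congrArg (fun r => Walk.cons h r) hXq
  have h1 : cnt G v o m = Nat.card D :=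
    (Nat.card_congr (Equiv.ofBijective f hbij)).symm
  rw [h1]
  calc Nat.card D
      = ∑ t : (Finset.Icc 2 m : Finset ℕ), Nat.card (Σ x : s,
          (WalkSub G x.1 (some v) (t.1 - 2)) × (WalkSub G v o (m - t.1))) :=
        nat_card_sigma _
    _ = ∑ t : (Finset.Icc 2 m : Finset ℕ),
          ∑ x ∈ s, cnt G x (some v) (t.1 - 2) * cnt G v o (m - t.1) := by
        refine Finset.sum_congr rfl fun t _ => ?_
        rw [nat_card_sigma]
        calc ∑ x : s, Nat.card ((WalkSub G x.1 (some v) (t.1 - 2)) ×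
              (WalkSub G v o (m - t.1)))
            = ∑ x : s, cnt G x.1 (some v) (t.1 - 2) * cnt G v o (m - t.1) := by
              refine Finset.sum_congr rfl fun x _ => ?_
              rw [Nat.card_prod]
              rfl
          _ = ∑ x ∈ s, cnt G x (some v) (t.1 - 2) * cnt G v o (m - t.1) :=
              Finset.sum_coe_sort s
                (fun x => cnt G x (some v) (t.1 - 2) * cnt G v o (m - t.1))
    _ = ∑ t ∈ Finset.Icc 2 m, ∑ x ∈ s, cnt G x (some v) (t - 2) * cnt G v o (m - t) :=
        Finset.sum_coe_sort (Finset.Icc 2 m)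
          (fun t => ∑ x ∈ s, cnt G x (some v) (t - 2) * cnt G v o (m - t))

end Graph2

section Main

open SimpleGraph Walk

variable {V : Type*} [DecidableEq V] [Fintype V] {G : SimpleGraph V} [DecidableRel G.Adj]

lemma cnt_base (v : V) (o : Option V) (ho : ∀ w ∈ o, G.Adj v w) : cnt G v o 0 = 1 := by
  have hz : WalkSub G v o 0 := ⟨Walk.nil, by simp, by
    intro w hw
    simp only [Walk.support_nil, List.mem_singleton]
    exact (ho w hw).ne'⟩
  rw [cnt, Nat.card_eq_one_iff_unique]
  constructor
  · constructor
    intro a b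
    apply Subtype.ext
    have ha : a.1 = Walk.nil := Walk.nil_iff_eq_nil.mp (Walk.length_eq_zero_iff.mp a.2.1)
    have hb : b.1 = Walk.nil := Walk.nil_iff_eq_nil.mp (Walk.length_eq_zero_iff.mp b.2.1)
    rw [ha, hb]
  · exact ⟨hz⟩

lemma cnt_eq_FF {c d gg : ℕ} (hg : G.girth = gg)
    (hnb : ∀ ⦃a b : V⦄, G.Adj a b → G.degree b = c + d - G.degree a) :
    ∀ m, m < gg → ∀ (v : V) (o : Option V), (∀ w ∈ o, G.Adj v w) →
      cnt G v o m = FF c d (G.degree v) (G.degree v - (if o.isSome then 1 else 0)) m := by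
  intro m
  induction m using Nat.strong_induction_on with
  | _ m ih =>
    intro hmg v o ho
    cases m with
    | zero =>
      rw [cnt_base v o ho]
      simp [FF]
    | succ n =>
      rw [cnt_rec hg (by omega) hmg v o ho]
      set e := G.degree v with he
      set r := e - (if o.isSome then 1 else 0) with hr
      set S := (G.neighborFinset v).filter (fun x => ∀ w ∈ o, x ≠ w) with hS
      have hcard : S.card = r := by
        rw [hS, hr, he]
        cases o with
        | none =>
          have htriv : (G.neighborFinset v).filter
              (fun x => ∀ w ∈ (none : Option V), x ≠ w) = G.neighborFinset v :=
            Finset.filter_true_of_mem (by intro x _ w hw; simp at hw)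
          rw [htriv, G.card_neighborFinset_eq_degree]
          simp
        | some w =>
          have hw : w ∈ G.neighborFinset v := (G.mem_neighborFinset v w).mpr (ho w rfl)
          have hpred : (G.neighborFinset v).filter
              (fun x => ∀ w' ∈ (some w : Option V), x ≠ w') =
              (G.neighborFinset v).filter (fun x => x ≠ w) :=
            Finset.filter_congr (by intro x _; simp)
          rw [hpred, Finset.filter_ne', Finset.card_erase_of_mem hw,
            G.card_neighborFinset_eq_degree]
          simp
      conv_rhs => rw [FF]
      rw [Finset.sum_attach (Finset.Icc 2 (n+1)) (fun t =>
        r * FF c d (c+d-e) (c+d-e-1) (t - 2) * FF c d e r (n+1-t))]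
      refine Finset.sum_congr rfl fun t ht => ?_
      obtain ⟨ht2, htm⟩ := Finset.mem_Icc.mp ht
      have h2 : cnt G v o (n+1-t) = FF c d e r (n+1-t) := ih (n+1-t) (by omega) (by omega) v o ho
      have h1 : ∀ x ∈ S, cnt G x (some v) (t-2) = FF c d (c+d-e) (c+d-e-1) (t-2) := by
        intro x hx
        have hvx : G.Adj v x := (G.mem_neighborFinset v x).mp (Finset.mem_filter.mp hx).1
        have hdx : G.degree x = c + d - e := by rw [hnb hvx, he]
        have hihx := ih (t-2) (by omega) (by omega) x (some v) (by
          intro w hw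
          rw [Option.mem_def, Option.some.injEq] at hw
          subst hw
          exact hvx.symm)
        rw [hihx, hdx]
        simp
      calc ∑ x ∈ S, cnt G x (some v) (t-2) * cnt G v o (n+1-t)
          = ∑ x ∈ S, FF c d (c+d-e) (c+d-e-1) (t-2) * FF c d e r (n+1-t) :=
            Finset.sum_congr rfl fun x hx => by rw [h1 x hx, h2]
        _ = S.card * (FF c d (c+d-e) (c+d-e-1) (t-2) * FF c d e r (n+1-t)) := by
            rw [Finset.sum_const, smul_eq_mul]
        _ = r * FF c d (c+d-e) (c+d-e-1) (t-2) * FF c d e r (n+1-t) := by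
            rw [hcard, mul_assoc]

end Main

/-- For `0 ≤ ℓ < g` and any two vertices `u, v` of the same degree, the
number of closed walks of length `ℓ` based at `u` equals the number of closed walks of
length `ℓ` based at `v`. -/
theorem closed_walk_count_eq_of_degree_eq {V : Type*} [Fintype V] [DecidableEq V]
    (G : SimpleGraph V) [DecidableRel G.Adj]
    (U : Set V) (c d : ℕ) (hc : 2 ≤ c) (hd : 2 ≤ d)
    (hbip : ∀ ⦃u v : V⦄, G.Adj u v → (u ∈ U ↔ v ∉ U))
    (hdegU : ∀ v ∈ U, G.degree v = c)
    (hdegW : ∀ v ∉ U, G.degree v = d)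
    (hcyc : ¬ G.IsAcyclic) (g : ℕ) (hg : G.girth = g)
    (ℓ : ℕ) (hℓ : ℓ < g) (u v : V) (hdeg : G.degree u = G.degree v) :
    {p : G.Walk u u | p.length = ℓ}.ncard = {p : G.Walk v v | p.length = ℓ}.ncard := by
  classical
  have hnb : ∀ ⦃a b : V⦄, G.Adj a b → G.degree b = c + d - G.degree a := by
    intro a b hab
    by_cases ha : a ∈ U
    · have hb : b ∉ U := (hbip hab).mp ha
      rw [hdegW b hb, hdegU a ha]
      omega
    · have hb : b ∈ U := not_not.mp (fun hbn => ha ((hbip hab).mpr hbn))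
      rw [hdegU b hb, hdegW a ha]
      omega
  have h1 : {p : G.Walk u u | p.length = ℓ}.ncard = cnt G u none ℓ := by
    rw [← Nat.card_coe_set_eq]
    exact Nat.card_congr (Equiv.subtypeEquivRight (by intro p; simp))
  have h2 : {p : G.Walk v v | p.length = ℓ}.ncard = cnt G v none ℓ := by
    rw [← Nat.card_coe_set_eq]
    exact Nat.card_congr (Equiv.subtypeEquivRight (by intro p; simp))
  rw [h1, h2, cnt_eq_FF hg hnb ℓ hℓ u none (by simp),
    cnt_eq_FF hg hnb ℓ hℓ v none (by simp), hdeg]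
end

section
/- For every integer ℓ with 0 ≤ ℓ < g, any two vertices u and v of G having the same degree, any edge e of G incident to u, and any edge f of G incident to v, the number of closed walks of length ℓ based at u that never traverse the edge e equals the number of closed walks of length ℓ based at v that never traverse the edge f. -/
open SimpleGraph Finset

section Aux

variable {V : Type*} [Fintype V] [DecidableEq V] {G : SimpleGraph V} [DecidableRel G.Adj]

set_option linter.unusedSectionVars false

/-- auxiliary list splitting lemma -/
private lemma list_split_unique {α : Type*} {x : α} :
    ∀ (l₁ : List α) (l₂ : List α) (t₁ t₂ : List α), x ∉ l₁ → x ∉ l₂ →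
      l₁ ++ x :: t₁ = l₂ ++ x :: t₂ → l₁ = l₂ ∧ t₁ = t₂ := by
  intro l₁
  induction l₁ with
  | nil =>
    intro l₂ t₁ t₂ h1 h2 h
    cases l₂ with
    | nil => simpa using h
    | cons b l₂ =>
      simp only [List.nil_append, List.cons_append, List.cons.injEq] at h
      exact absurd (h.1 ▸ List.mem_append_right l₂ (List.mem_cons_self (a := x) (l := t₂)))
        (by simp_all [h.1, ← h.2])
  | cons a l₁ ih =>
    intro l₂ t₁ t₂ h1 h2 h
    cases l₂ with
    | nil =>
      simp only [List.cons_append, List.nil_append, List.cons.injEq] at h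
      exact absurd (by simp [h.1]) h1
    | cons b l₂ =>
      simp only [List.cons_append, List.cons.injEq] at h
      obtain ⟨rfl, h⟩ := h
      obtain ⟨rfl, rfl⟩ := ih l₂ t₁ t₂ (fun hx => h1 (List.mem_cons_of_mem _ hx))
        (fun hx => h2 (List.mem_cons_of_mem _ hx)) h
      exact ⟨rfl, rfl⟩

/-- cycle gives a lower bound on girth -/
private lemma girth_le_of_cycle {x : V} {cw : G.Walk x x} (hcw : cw.IsCycle) :
    G.girth ≤ cw.length := by
  have h1 : G.egirth ≤ (cw.length : ℕ∞) := SimpleGraph.le_egirth.mp le_rfl _ _ hcw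
  exact ENat.toNat_le_toNat h1 (ENat.coe_ne_top _)

private lemma isPath_concat {a b x : V} {p : G.Walk a b} (hp : p.IsPath) (hx : x ∉ p.support)
    (h : G.Adj b x) : (p.concat h).IsPath := by
  rw [← SimpleGraph.Walk.isPath_reverse_iff, Walk.reverse_concat]
  exact (SimpleGraph.Walk.isPath_reverse_iff p).mpr hp |>.cons (by simpa using hx)

/-- two walks whose supports coincide are equal -/
private lemma walk_support_inj {u v : V} :
    ∀ (p q : G.Walk u v), p.support = q.support → p = q := by
  intro p
  induction p with
  | nil =>
    intro q h
    cases q with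
    | nil => rfl
    | cons h' q' =>
      exfalso
      have hlen := congrArg List.length h
      simp only [Walk.support_nil, Walk.support_cons, List.length_cons,
        List.length_singleton] at hlen
      cases hq : q'.support with
      | nil => exact q'.support_ne_nil hq
      | cons z l => rw [hq] at hlen; simp at hlen
  | @cons a b c h' p' ih =>
    intro q h
    cases q with
    | nil =>
      exfalso
      have hlen := congrArg List.length h
      simp only [Walk.support_nil, Walk.support_cons, List.length_cons,
        List.length_singleton] at hlen
      cases hq : p'.support with
      | nil => exact p'.support_ne_nil hq
      | cons z l => rw [hq] at hlen; simp at hlen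
    | @cons _ b' _ h'' q' =>
      simp only [Walk.support_cons, List.cons.injEq, true_and] at h
      have hb : b = b' := by
        have := congrArg List.head? h
        rwa [p'.support_eq_cons, q'.support_eq_cons, List.head?_cons, List.head?_cons,
          Option.some.injEq] at this
      subst hb
      exact congrArg (Walk.cons h') (ih q' h)

/-- girth bound from a walk plus two edges to an external vertex -/
private lemma girth_le_two_edges {s t x : V} (w : G.Walk s t) (hxs : G.Adj x s) (hxt : G.Adj x t)
    (hst : s ≠ t) (hx : x ∉ w.support) : G.girth ≤ w.length + 2 := by
  classical
  have hP : w.bypass.IsPath := w.bypass_isPath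
  have hxP : x ∉ w.bypass.support := fun hh => hx (w.support_bypass_subset hh)
  set P := w.bypass with hPdef
  have hq : (P.concat hxt.symm).IsPath := isPath_concat hP hxP hxt.symm
  have hcyc : (Walk.cons hxs (P.concat hxt.symm)).IsCycle := by
    rw [Walk.cons_isCycle_iff]
    refine ⟨hq, ?_⟩
    rw [Walk.edges_concat, List.concat_eq_append]
    intro hmem
    rcases List.mem_append.mp hmem with hmem | hmem
    · exact hxP (Walk.fst_mem_support_of_mem_edges P hmem)
    · rw [List.mem_singleton] at hmem
      rw [Sym2.eq_iff] at hmem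
      rcases hmem with ⟨h1, h2⟩ | ⟨h1, h2⟩
      · exact hst (h2.trans h1)
      · exact hst h2
  have h2 : G.girth ≤ (Walk.cons hxs (P.concat hxt.symm)).length := girth_le_of_cycle hcyc
  have hPl : P.length ≤ w.length := w.length_bypass_le
  calc G.girth ≤ (Walk.cons hxs (P.concat hxt.symm)).length := h2
    _ = P.length + 2 := by simp [Walk.length_concat]
    _ ≤ w.length + 2 := by omega

/-- girth bound from a walk between adjacent vertices avoiding their edge -/
private lemma girth_le_one_edge {s t : V} (w : G.Walk s t) (hst : G.Adj s t)
    (he : s(s, t) ∉ w.edges) : G.girth ≤ w.length + 1 := by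
  classical
  have hP : w.bypass.IsPath := w.bypass_isPath
  set P := w.bypass with hPdef
  have hcyc : (Walk.cons hst.symm P).IsCycle := by
    rw [Walk.cons_isCycle_iff]
    refine ⟨hP, fun hmem => he ?_⟩
    have := w.edges_bypass_subset hmem
    rwa [Sym2.eq_swap] at this
  have h2 : G.girth ≤ (Walk.cons hst.symm P).length := girth_le_of_cycle hcyc
  have hPl : P.length ≤ w.length := w.length_bypass_le
  calc G.girth ≤ (Walk.cons hst.symm P).length := h2
    _ = P.length + 1 := by simp
    _ ≤ w.length + 1 := by omega

/-- parity of walks in a bipartite graph -/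
private lemma walk_even_iff {U : Set V}
    (hbip : ∀ ⦃u v : V⦄, G.Adj u v → (u ∈ U ↔ v ∉ U)) {s t : V} (w : G.Walk s t) :
    Even w.length ↔ (s ∈ U ↔ t ∈ U) := by
  induction w with
  | nil => simp
  | @cons a b c h p ih =>
    have hab := hbip h
    simp only [Walk.length_cons, Nat.even_add_one, ih]
    tauto

end Aux

section Main

variable {V : Type*} [Fintype V] [DecidableEq V] {G : SimpleGraph V} [DecidableRel G.Adj]

set_option linter.unusedSectionVars false

/-- closed walks of length `ℓ` at `x` avoiding the vertex `z` -/
private def SF (G : SimpleGraph V) [DecidableRel G.Adj] (ℓ : ℕ) (x z : V) :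
    Finset (G.Walk x x) :=
  (G.finsetWalkLength ℓ x x).filter (fun p => z ∉ p.support)

private lemma mem_SF {ℓ : ℕ} {x z : V} {p : G.Walk x x} :
    p ∈ SF G ℓ x z ↔ p.length = ℓ ∧ z ∉ p.support := by
  simp [SF, SimpleGraph.mem_finsetWalkLength_iff]

/-- an inner excursion avoiding `x` also avoids any other neighbor `x'` of `x` -/
private lemma inner_avoids {x a x' : V} (hxa : G.Adj x a) (hxx' : G.Adj x x') (hax' : a ≠ x')
    (inner : G.Walk a a) (hx : x ∉ inner.support) (hlen : inner.length + 2 < G.girth) :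
    x' ∉ inner.support := by
  intro hmem
  have hle : G.girth ≤ (inner.takeUntil x' hmem).length + 2 :=
    girth_le_two_edges (inner.takeUntil x' hmem) hxa hxx' hax'
      (fun hh => hx (inner.support_takeUntil_subset hmem hh))
  have := inner.length_takeUntil_le hmem
  omega

private lemma SF_zero (x x' : V) (hxx' : G.Adj x x') : (SF G 0 x x').card = 1 := by
  have h : SF G 0 x x' = {Walk.nil} := by
    ext p
    rw [mem_SF, Finset.mem_singleton]
    constructor
    · rintro ⟨hl, -⟩
      cases p with
      | nil => rfl
      | cons h q => simp at hl
    · rintro rfl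
      exact ⟨rfl, by simp [hxx'.ne']⟩
  rw [h, Finset.card_singleton]

/-- the recurrence -/
private lemma SF_succ {g : ℕ} (hg : G.girth = g) (L : ℕ) (hL : L + 1 < g)
    (x x' : V) (hxx' : G.Adj x x') :
    (SF G (L + 1) x x').card =
      ∑ a ∈ (G.neighborFinset x).erase x', ∑ j ∈ Finset.range L,
        (SF G j a x).card * (SF G (L - 1 - j) x x').card := by
  classical
  set A := (G.neighborFinset x).erase x' with hA
  have hadj : ∀ a : V, a ∈ A → G.Adj x a ∧ a ≠ x' := by
    intro a ha
    rw [hA, Finset.mem_erase, SimpleGraph.mem_neighborFinset] at ha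
    exact ⟨ha.2, ha.1⟩
  -- the reassembly map
  have hmem : ∀ (a : {y // y ∈ A}) (j : Fin L) (i : {p // p ∈ SF G j.1 a.1 x})
      (r : {p // p ∈ SF G (L - 1 - j.1) x x'}),
      Walk.cons (hadj a.1 a.2).1 ((i.1.concat (hadj a.1 a.2).1.symm).append r.1)
        ∈ SF G (L + 1) x x' := by
    rintro ⟨a, ha⟩ ⟨j, hj⟩ ⟨i, hi⟩ ⟨r, hr⟩
    obtain ⟨hxa, hax'⟩ := hadj a ha
    obtain ⟨hil, hix⟩ := mem_SF.mp hi
    obtain ⟨hrl, hrx'⟩ := mem_SF.mp hr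
    rw [mem_SF]
    have hjL : j < L := hj
    constructor
    · simp only [Walk.length_cons, Walk.length_append, Walk.length_concat, hil, hrl]
      omega
    · have hix' : x' ∉ i.support := by
        refine inner_avoids hxa hxx' hax' i hix ?_
        rw [hg]; omega
      intro hcon
      rw [Walk.support_cons, List.mem_cons] at hcon
      rcases hcon with h | hcon
      · exact hxx'.ne' h
      rw [Walk.mem_support_append_iff] at hcon
      rcases hcon with h | h
      · rw [Walk.support_concat, List.mem_append,
          List.mem_singleton] at h
        rcases h with h | h
        · exact hix' h
        · exact hxx'.ne' h
      · exact hrx' h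
  let Ψ : ((a : {y // y ∈ A}) × (j : Fin L) ×
        ({p // p ∈ SF G j.1 a.1 x} × {p // p ∈ SF G (L - 1 - j.1) x x'})) →
      {p // p ∈ SF G (L + 1) x x'} :=
    fun t => ⟨_, hmem t.1 t.2.1 t.2.2.1 t.2.2.2⟩
  have hinj : Function.Injective Ψ := by
    rintro ⟨⟨a₁, ha₁⟩, ⟨j₁, hj₁⟩, ⟨⟨i₁, hi₁⟩, ⟨r₁, hr₁⟩⟩⟩ ⟨⟨a₂, ha₂⟩, ⟨j₂, hj₂⟩, ⟨⟨i₂, hi₂⟩, ⟨r₂, hr₂⟩⟩⟩ heq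
    simp only [Ψ, Subtype.mk.injEq] at heq
    obtain ⟨hil₁, hix₁⟩ := mem_SF.mp hi₁
    obtain ⟨hrl₁, hrx₁⟩ := mem_SF.mp hr₁
    obtain ⟨hil₂, hix₂⟩ := mem_SF.mp hi₂
    obtain ⟨hrl₂, hrx₂⟩ := mem_SF.mp hr₂
    have hsupp := congrArg Walk.support heq
    simp only [Walk.support_cons, List.cons.injEq, true_and] at hsupp
    -- equal second vertices
    have haa : a₁ = a₂ := by
      have h1 := ((i₁.concat (hadj a₁ ha₁).1.symm).append r₁).support_eq_cons
      have h2 := ((i₂.concat (hadj a₂ ha₂).1.symm).append r₂).support_eq_cons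
      have := congrArg List.head? hsupp
      rwa [h1, h2, List.head?_cons, List.head?_cons, Option.some.injEq] at this
    subst haa
    simp only [Walk.support_append, Walk.support_concat, List.concat_eq_append,
      List.append_assoc, List.singleton_append] at hsupp
    obtain ⟨his, hrs⟩ := list_split_unique i₁.support i₂.support _ _ hix₁ hix₂ hsupp
    have hjj : j₁ = j₂ := by
      have e1 : i₁.length = j₁ := hil₁
      have e2 : i₂.length = j₂ := hil₂
      have l1 := i₁.length_support
      have l2 := i₂.length_support
      rw [his] at l1
      omega
    subst hjj
    have hii : i₁ = i₂ := walk_support_inj i₁ i₂ his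
    subst hii
    have hrr : r₁ = r₂ := by
      refine walk_support_inj r₁ r₂ ?_
      rw [r₁.support_eq_cons, r₂.support_eq_cons, hrs]
    subst hrr
    rfl
  have hsurj : Function.Surjective Ψ := by
    rintro ⟨p, hp⟩
    obtain ⟨hlen, hx'⟩ := mem_SF.mp hp
    cases p with
    | nil => simp at hlen
    | @cons _ a _ hxa q =>
      have hqlen : q.length = L := by simpa using hlen
      have hx'q : x' ∉ q.support := fun hh => hx' (by simp [Walk.support_cons, hh])
      have hxq : x ∈ q.support := q.end_mem_support
      have hcount : (q.takeUntil x hxq).support.count x = 1 :=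
        q.count_support_takeUntil_eq_one hxq
      have hax : a ≠ x := hxa.ne'
      cases hrev : (q.takeUntil x hxq).reverse with
      | nil =>
        exfalso
        have : (q.takeUntil x hxq).length = 0 := by
          have := congrArg Walk.length hrev
          simpa using this
        exact hax (Walk.eq_of_length_eq_zero this).symm
      | @cons _ b _ hxb r' =>
        -- x not in r'.support
        have hsupprev : (q.takeUntil x hxq).reverse.support = x :: r'.support := by
          rw [hrev, Walk.support_cons]
        have hxr' : x ∉ r'.support := by
          have hcnt : ((q.takeUntil x hxq).support.reverse).count x = 1 := by
            rwa [List.count_reverse]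
          rw [← Walk.support_reverse, hsupprev] at hcnt
          simp only [List.count_cons_self] at hcnt
          exact List.count_eq_zero.mp (by omega)
        have hlenq1 : (q.takeUntil x hxq).length = r'.length + 1 := by
          have := congrArg Walk.length hrev
          simpa [Walk.length_reverse] using this
        have hq1le : (q.takeUntil x hxq).length ≤ L := hqlen ▸ q.length_takeUntil_le hxq
        -- b = a by the girth argument
        have hba : b = a := by
          by_contra hba
          have := girth_le_two_edges r' hxb hxa hba hxr'
          rw [hg] at this
          omega
        subst hba
        -- assemble the preimage
        have hq1 : (q.takeUntil x hxq) = r'.reverse.concat hxb.symm := by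
          conv_lhs => rw [← Walk.reverse_reverse (q.takeUntil x hxq), hrev]
          rw [Walk.reverse_cons, Walk.concat_eq_append]
        have haA : b ∈ A := by
          rw [hA, Finset.mem_erase, SimpleGraph.mem_neighborFinset]
          exact ⟨fun hh => hx'q (hh ▸ q.start_mem_support), hxa⟩
        have hjL : r'.reverse.length < L := by
          rw [Walk.length_reverse]; omega
        have himem : r'.reverse ∈ SF G r'.reverse.length b x := by
          rw [mem_SF]
          exact ⟨rfl, by rwa [Walk.support_reverse, List.mem_reverse]⟩
        have hq2len : (q.dropUntil x hxq).length = L - 1 - r'.reverse.length := by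
          have := congrArg Walk.length (q.take_spec hxq)
          rw [Walk.length_append] at this
          rw [Walk.length_reverse]
          omega
        have hrmem : q.dropUntil x hxq ∈ SF G (L - 1 - r'.reverse.length) x x' := by
          rw [mem_SF]
          exact ⟨hq2len, fun hh => hx'q (q.support_dropUntil_subset hxq hh)⟩
        refine ⟨⟨⟨b, haA⟩, ⟨⟨r'.reverse.length, hjL⟩, ⟨⟨r'.reverse, himem⟩,
          ⟨q.dropUntil x hxq, hrmem⟩⟩⟩⟩, ?_⟩
        apply Subtype.ext
        show Walk.cons _ ((r'.reverse.concat _).append (q.dropUntil x hxq)) = Walk.cons hxa q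
        have hfin : (r'.reverse.concat ((hadj b haA).1.symm)).append (q.dropUntil x hxq) = q := by
          rw [show r'.reverse.concat ((hadj b haA).1.symm) = q.takeUntil x hxq from hq1.symm]
          exact q.take_spec hxq
        rw [hfin]
  have hbij : Function.Bijective Ψ := ⟨hinj, hsurj⟩
  have hcard := Fintype.card_of_bijective hbij
  rw [Fintype.card_coe] at hcard
  rw [← hcard]
  rw [Fintype.card_sigma, Finset.univ_eq_attach,
    ← Finset.sum_attach A (fun y => ∑ j ∈ Finset.range L,
      (SF G j y x).card * (SF G (L - 1 - j) x x').card)]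
  refine Finset.sum_congr rfl fun a _ => ?_
  rw [Fintype.card_sigma, ← Fin.sum_univ_eq_sum_range]
  refine Finset.sum_congr rfl fun j _ => ?_
  rw [Fintype.card_prod, Fintype.card_coe, Fintype.card_coe]

/-- the universal count function -/
private def wfun : ℕ → ℕ → ℕ → ℕ
  | 0, _, _ => 1
  | (L + 1), m, k =>
      (m - 1) * ∑ j ∈ (Finset.range L).attach, wfun j.1 k m * wfun (L - 1 - j.1) m k
  termination_by L _ _ => L
  decreasing_by
  · exact Nat.lt_succ_of_lt (Finset.mem_range.mp j.2)
  · have := Finset.mem_range.mp j.2; omega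

private lemma wfun_zero (m k : ℕ) : wfun 0 m k = 1 := by
  simp [wfun]

private lemma wfun_succ (L m k : ℕ) :
    wfun (L + 1) m k = (m - 1) * ∑ j ∈ Finset.range L, wfun j k m * wfun (L - 1 - j) m k := by
  show wfun (L + 1) m k = _
  rw [wfun]
  congr 1
  exact Finset.sum_attach (Finset.range L) (fun j => wfun j k m * wfun (L - 1 - j) m k)

/-- side-dependent neighbor degree -/
private noncomputable def opp (U : Set V) (c d : ℕ) (x : V) : ℕ :=
  haveI := Classical.propDecidable (x ∈ U)
  if x ∈ U then d else c

private lemma MN {U : Set V} {c d : ℕ}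
    (hbip : ∀ ⦃u v : V⦄, G.Adj u v → (u ∈ U ↔ v ∉ U))
    (hdegU : ∀ v ∈ U, G.degree v = c)
    (hdegW : ∀ v ∉ U, G.degree v = d)
    {g : ℕ} (hg : G.girth = g) :
    ∀ L, L < g → ∀ x x', G.Adj x x' →
      (SF G L x x').card = wfun L (G.degree x) (opp U c d x) := by
  intro L
  induction L using Nat.strong_induction_on with
  | _ L ih =>
    match L with
    | 0 =>
      intro hLg x x' hxx'
      rw [SF_zero x x' hxx', wfun_zero]
    | (L + 1) =>
      intro hLg x x' hxx'
      have hopp : ∀ a, G.Adj x a → G.degree a = opp U c d x ∧ opp U c d a = G.degree x := by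
        intro a ha
        by_cases hx : x ∈ U
        · have ha' : a ∉ U := (hbip ha).mp hx
          simp [opp, hx, ha', hdegU x hx, hdegW a ha']
        · have ha' : a ∈ U := by have := hbip ha; tauto
          simp [opp, hx, ha', hdegW x hx, hdegU a ha']
      rw [SF_succ hg L hLg x x' hxx', wfun_succ]
      have hstep : ∀ a ∈ (G.neighborFinset x).erase x',
          (∑ j ∈ Finset.range L, (SF G j a x).card * (SF G (L - 1 - j) x x').card)
            = ∑ j ∈ Finset.range L,
                wfun j (opp U c d x) (G.degree x) * wfun (L - 1 - j) (G.degree x) (opp U c d x) := by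
        intro a ha
        rw [Finset.mem_erase, SimpleGraph.mem_neighborFinset] at ha
        refine Finset.sum_congr rfl fun j hj => ?_
        rw [Finset.mem_range] at hj
        have h1 : (SF G j a x).card = wfun j (G.degree a) (opp U c d a) :=
          ih j (by omega) (by omega) a x ha.2.symm
        have h2 : (SF G (L - 1 - j) x x').card
            = wfun (L - 1 - j) (G.degree x) (opp U c d x) :=
          ih (L - 1 - j) (by omega) (by omega) x x' hxx'
        rw [h1, h2, (hopp a ha.2).1, (hopp a ha.2).2]
      rw [Finset.sum_congr rfl hstep, Finset.sum_const, Finset.card_erase_of_mem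
        (by rwa [SimpleGraph.mem_neighborFinset]), SimpleGraph.card_neighborFinset_eq_degree,
        smul_eq_mul]

end Main

/-- For `0 ≤ ℓ < g`, vertices `u, v` of the same degree, an edge `e`
incident to `u` and an edge `f` incident to `v`, the number of closed walks of length
`ℓ` based at `u` never traversing `e` equals the number of closed walks of length `ℓ`
based at `v` never traversing `f`. -/
theorem closed_walk_avoiding_edge_count_eq {V : Type*} [Fintype V] [DecidableEq V]
    (G : SimpleGraph V) [DecidableRel G.Adj]
    (U : Set V) (c d : ℕ) (hc : 2 ≤ c) (hd : 2 ≤ d)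
    (hbip : ∀ ⦃u v : V⦄, G.Adj u v → (u ∈ U ↔ v ∉ U))
    (hdegU : ∀ v ∈ U, G.degree v = c)
    (hdegW : ∀ v ∉ U, G.degree v = d)
    (hcyc : ¬ G.IsAcyclic) (g : ℕ) (hg : G.girth = g)
    (ℓ : ℕ) (hℓ : ℓ < g) (u v : V) (hdeg : G.degree u = G.degree v)
    (e f : Sym2 V) (he : e ∈ G.incidenceSet u) (hf : f ∈ G.incidenceSet v) :
    {p : G.Walk u u | p.length = ℓ ∧ e ∉ p.edges}.ncard
      = {p : G.Walk v v | p.length = ℓ ∧ f ∉ p.edges}.ncard := by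
  classical
  by_cases hpar : Even ℓ
  swap
  · have h1 : {p : G.Walk u u | p.length = ℓ ∧ e ∉ p.edges} = ∅ := by
      ext p
      simp only [Set.mem_setOf_eq, Set.mem_empty_iff_false, iff_false, not_and]
      intro hl _
      exact (hpar (hl ▸ (walk_even_iff hbip p).mpr Iff.rfl)).elim
    have h2 : {p : G.Walk v v | p.length = ℓ ∧ f ∉ p.edges} = ∅ := by
      ext p
      simp only [Set.mem_setOf_eq, Set.mem_empty_iff_false, iff_false, not_and]
      intro hl _
      exact (hpar (hl ▸ (walk_even_iff hbip p).mpr Iff.rfl)).elim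
    rw [h1, h2, Set.ncard_empty, Set.ncard_empty]

  · -- ℓ even
    obtain ⟨u', heu⟩ := Sym2.mem_iff_exists.mp he.2
    obtain ⟨v', hfv⟩ := Sym2.mem_iff_exists.mp hf.2
    have hAdjU : G.Adj u u' := G.mem_edgeSet.mp (heu ▸ he.1)
    have hAdjV : G.Adj v v' := G.mem_edgeSet.mp (hfv ▸ hf.1)
    -- g is even
    have hgeven : Even g := by
      obtain ⟨x0, w0, hw0c, hw0l⟩ := SimpleGraph.exists_girth_eq_length.mpr hcyc
      have := (walk_even_iff hbip w0).mpr Iff.rfl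
      rw [← hw0l, hg] at this
      exact this
    have hg3 : 3 ≤ g := hg ▸ SimpleGraph.three_le_girth hcyc
    have hℓ2 : ℓ + 2 ≤ g := by
      rw [Nat.even_iff] at hpar hgeven
      omega
    -- convert edge-avoidance to vertex-avoidance
    have conv : ∀ (z z' : V) (ee : Sym2 V), G.Adj z z' → ee = s(z, z') →
        {p : G.Walk z z | p.length = ℓ ∧ ee ∉ p.edges} = ↑(SF G ℓ z z') := by
      intro z z' ee hzz' hee
      ext p
      rw [Set.mem_setOf_eq, Finset.mem_coe, mem_SF]
      constructor
      · rintro ⟨hl, hed⟩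
        refine ⟨hl, fun hmem => ?_⟩
        have hgl := girth_le_one_edge (p.takeUntil z' hmem) hzz'
          (fun hh => hed (hee ▸ p.edges_takeUntil_subset hmem hh))
        have := p.length_takeUntil_le hmem
        rw [hg] at hgl
        omega
      · rintro ⟨hl, hsup⟩
        refine ⟨hl, fun hh => hsup ?_⟩
        exact p.snd_mem_support_of_mem_edges (hee ▸ hh)
    rw [conv u u' e hAdjU heu, conv v v' f hAdjV hfv, Set.ncard_coe_finset,
      Set.ncard_coe_finset, MN hbip hdegU hdegW hg ℓ hℓ u u' hAdjU,
      MN hbip hdegU hdegW hg ℓ hℓ v v' hAdjV, hdeg]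
    have hoppeq : opp U c d u = opp U c d v := by
      by_cases hu : u ∈ U <;> by_cases hv : v ∈ U
      · simp [opp, hu, hv]
      · have h1 := hdegU u hu
        have h2 := hdegW v (by simpa using hv)
        simp only [opp, hu, hv, if_true, if_false]
        omega
      · have h1 := hdegW u (by simpa using hu)
        have h2 := hdegU v hv
        simp only [opp, hu, hv, if_true, if_false]
        omega
      · simp [opp, hu, hv]
    rw [hoppeq]
end

section
/- Let C be a cycle of G of length i (so i ≥ g), let v be a vertex of C belonging to U (hence of degree c), and let l ≥ 1 be an integer with i + 2l < 2g. Then the number of vertices z of G not lying on C such that there exists a path of length l from v to z using no edge of C equals (c−2)·(d−1)^{⌈(l−1)/2⌉}·(c−1)^{⌊(l−1)/2⌋}. -/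
set_option linter.unusedSectionVars false


section Aux
open SimpleGraph
variable {V : Type*} {G : SimpleGraph V}

private def stripWalk {t : V} : (Σ z : V, G.Walk z t) → Σ z : V, G.Walk z t
  | ⟨_, .nil⟩ => ⟨t, .nil⟩
  | ⟨_, .cons _ r⟩ => ⟨_, r⟩

private lemma stripWalk_cons {V : Type*} {G : SimpleGraph V} {t x y : V} (h : G.Adj x y)
    (r : G.Walk y t) : stripWalk ⟨x, SimpleGraph.Walk.cons h r⟩ = ⟨y, r⟩ := rfl

private lemma walk_length_one {a b : V} (w : G.Walk a b) (h : w.length = 1) :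
    ∃ (h' : G.Adj a b), w = SimpleGraph.Walk.cons h' SimpleGraph.Walk.nil := by
  cases w with
  | nil => simp at h
  | cons h' r =>
    cases r with
    | nil => exact ⟨h', rfl⟩
    | cons h'' r' => simp [SimpleGraph.Walk.length_cons] at h

private lemma walk_exists_cons {V : Type*} {G : SimpleGraph V} {a b : V} (w : G.Walk a b)
    (h : w.length ≠ 0) :
    ∃ (x : V) (h' : G.Adj a x) (r : G.Walk x b), w = SimpleGraph.Walk.cons h' r := by
  cases w with
  | nil => simp at h
  | cons h' r => exact ⟨_, h', r, rfl⟩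

private lemma exists_cons_of_mem_edges {u w x : V} (p : G.Walk u w) (hp : p.IsPath)
    (hx : s(u, x) ∈ p.edges) :
    ∃ (h : G.Adj u x) (r : G.Walk x w), p = SimpleGraph.Walk.cons h r := by
  cases p with
  | nil => simp at hx
  | cons h' r =>
    rw [SimpleGraph.Walk.edges_cons] at hx
    rcases List.mem_cons.mp hx with heq | hmem
    · rw [Sym2.eq_iff] at heq
      rcases heq with ⟨-, rfl⟩ | ⟨h1, h2⟩
      · exact ⟨h', r, rfl⟩
      · exact absurd h1 h'.ne
    · exact absurd (SimpleGraph.Walk.fst_mem_support_of_mem_edges r hmem)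
        ((SimpleGraph.Walk.cons_isPath_iff _ _).mp hp).2

private lemma parity_walk {U : Set V}
    (hbip : ∀ ⦃u v : V⦄, G.Adj u v → (u ∈ U ↔ v ∉ U)) :
    ∀ {a b : V} (w : G.Walk a b), ((a ∈ U ↔ b ∈ U) ↔ Even w.length) := by
  intro a b w
  induction w with
  | nil => simp
  | cons h r ih =>
    rw [SimpleGraph.Walk.length_cons, Nat.even_add_one, ← ih]
    have := hbip h
    tauto
variable [DecidableEq V]

private lemma walk_one_unique {a b : V} (p q : G.Walk a b)
    (hp : p.length = 1) (hq : q.length = 1) : p = q := by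
  obtain ⟨h1, rfl⟩ := walk_length_one p hp
  obtain ⟨h2, rfl⟩ := walk_length_one q hq
  rfl

private lemma exists_cycle_le_of_two_paths' :
    ∀ (n : ℕ) {u w : V} (p q : G.Walk u w), p.IsPath → q.IsPath → p ≠ q →
      p.length + q.length ≤ n →
      ∃ (x : V) (c : G.Walk x x), c.IsCycle ∧ c.length ≤ p.length + q.length := by
  intro n
  induction n using Nat.strong_induction_on with
  | _ n ih =>
  intro u w p q hp hq hne hlen
  have huw : u ≠ w := by
    rintro rfl
    exact hne ((SimpleGraph.Walk.isPath_iff_eq_nil.mp hp).trans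
      (SimpleGraph.Walk.isPath_iff_eq_nil.mp hq).symm)
  have hp1 : 1 ≤ p.length := Nat.one_le_iff_ne_zero.mpr
    (fun h => huw (SimpleGraph.Walk.eq_of_length_eq_zero h))
  have hq1 : 1 ≤ q.length := Nat.one_le_iff_ne_zero.mpr
    (fun h => huw (SimpleGraph.Walk.eq_of_length_eq_zero h))
  by_cases hshare : ∃ x, x ∈ p.support ∧ x ∈ q.support ∧ x ≠ u ∧ x ≠ w
  · obtain ⟨x, hxp, hxq, hxu, hxw⟩ := hshare
    have hpl : (p.takeUntil x hxp).length + (p.dropUntil x hxp).length = p.length := by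
      have := congrArg SimpleGraph.Walk.length (p.take_spec hxp)
      rwa [SimpleGraph.Walk.length_append] at this
    have hql : (q.takeUntil x hxq).length + (q.dropUntil x hxq).length = q.length := by
      have := congrArg SimpleGraph.Walk.length (q.take_spec hxq)
      rwa [SimpleGraph.Walk.length_append] at this
    have h1p : 1 ≤ (p.takeUntil x hxp).length := Nat.one_le_iff_ne_zero.mpr
      (fun h => hxu (SimpleGraph.Walk.eq_of_length_eq_zero h).symm)
    have h1q : 1 ≤ (q.takeUntil x hxq).length := Nat.one_le_iff_ne_zero.mpr
      (fun h => hxu (SimpleGraph.Walk.eq_of_length_eq_zero h).symm)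
    have h2p : 1 ≤ (p.dropUntil x hxp).length := Nat.one_le_iff_ne_zero.mpr
      (fun h => hxw (SimpleGraph.Walk.eq_of_length_eq_zero h))
    have h2q : 1 ≤ (q.dropUntil x hxq).length := Nat.one_le_iff_ne_zero.mpr
      (fun h => hxw (SimpleGraph.Walk.eq_of_length_eq_zero h))
    by_cases h11 : p.takeUntil x hxp = q.takeUntil x hxq
    · have h22 : p.dropUntil x hxp ≠ q.dropUntil x hxq := by
        intro h
        apply hne
        rw [← p.take_spec hxp, ← q.take_spec hxq, h11, h]
      obtain ⟨y, cc, hcc, hlc⟩ := ih ((p.dropUntil x hxp).length + (q.dropUntil x hxq).length)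
        (by omega) _ _ (hp.dropUntil hxp) (hq.dropUntil hxq) h22 le_rfl
      exact ⟨y, cc, hcc, by omega⟩
    · obtain ⟨y, cc, hcc, hlc⟩ := ih ((p.takeUntil x hxp).length + (q.takeUntil x hxq).length)
        (by omega) _ _ (hp.takeUntil hxp) (hq.takeUntil hxq) h11 le_rfl
      exact ⟨y, cc, hcc, by omega⟩
  · push_neg at hshare
    refine ⟨u, p.append q.reverse, ?_, by
      rw [SimpleGraph.Walk.length_append, SimpleGraph.Walk.length_reverse]⟩
    rw [SimpleGraph.Walk.isCycle_def]
    refine ⟨?_, ?_, ?_⟩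
    · rw [SimpleGraph.Walk.isTrail_def, SimpleGraph.Walk.edges_append,
        SimpleGraph.Walk.edges_reverse, List.nodup_append]
      refine ⟨hp.isTrail.edges_nodup, List.nodup_reverse.mpr hq.isTrail.edges_nodup, ?_⟩
      intro e he1 e' he2 hee'
      subst hee'
      rw [List.mem_reverse] at he2
      induction e using Sym2.ind with
      | _ a b =>
      have hadj : G.Adj a b := (SimpleGraph.Walk.edges_subset_edgeSet p he1)
      have hap : a ∈ p.support := SimpleGraph.Walk.fst_mem_support_of_mem_edges p he1
      have hbp : b ∈ p.support := SimpleGraph.Walk.snd_mem_support_of_mem_edges p he1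
      have haq : a ∈ q.support := SimpleGraph.Walk.fst_mem_support_of_mem_edges q he2
      have hbq : b ∈ q.support := SimpleGraph.Walk.snd_mem_support_of_mem_edges q he2
      have ha : a = u ∨ a = w := by
        by_contra hcon
        push_neg at hcon
        exact hcon.2 (hshare a hap haq hcon.1)
      have hb : b = u ∨ b = w := by
        by_contra hcon
        push_neg at hcon
        exact hcon.2 (hshare b hbp hbq hcon.1)
      have heuw : s(a, b) = s(u, w) := by
        rcases ha with rfl | rfl <;> rcases hb with rfl | rfl
        · exact absurd rfl hadj.ne
        · rfl
        · exact Sym2.eq_swap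
        · exact absurd rfl hadj.ne
      rw [heuw] at he1 he2
      obtain ⟨hadj1, r1, hr1⟩ := exists_cons_of_mem_edges p hp he1
      obtain ⟨hadj2, r2, hr2⟩ := exists_cons_of_mem_edges q hq he2
      apply hne
      exact walk_one_unique p q
        (by rw [hr1, SimpleGraph.Walk.length_cons,
          (SimpleGraph.Walk.isPath_iff_eq_nil (p := r1)).mp
            ((SimpleGraph.Walk.cons_isPath_iff _ _).mp (hr1 ▸ hp)).1,
          SimpleGraph.Walk.length_nil])
        (by rw [hr2, SimpleGraph.Walk.length_cons,
          (SimpleGraph.Walk.isPath_iff_eq_nil (p := r2)).mp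
            ((SimpleGraph.Walk.cons_isPath_iff _ _).mp (hr2 ▸ hq)).1,
          SimpleGraph.Walk.length_nil])
    · intro h
      have := congrArg SimpleGraph.Walk.length h
      rw [SimpleGraph.Walk.length_append, SimpleGraph.Walk.length_reverse,
        SimpleGraph.Walk.length_nil] at this
      omega
    · rw [SimpleGraph.Walk.support_append]
      rw [SimpleGraph.Walk.support_eq_cons p, List.cons_append, List.tail_cons]
      rw [List.nodup_append]
      refine ⟨hp.support_nodup.tail, (hq.reverse.support_nodup).tail, ?_⟩
      intro x hx1 y hx2 hxy
      subst hxy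
      have hxp : x ∈ p.support := List.mem_of_mem_tail hx1
      have hxu : x ≠ u := by
        intro h
        subst h
        have := hp.support_nodup
        rw [SimpleGraph.Walk.support_eq_cons p] at this
        exact (List.nodup_cons.mp this).1 hx1
      have hxq : x ∈ q.support := by
        have : x ∈ q.reverse.support := List.mem_of_mem_tail hx2
        rwa [SimpleGraph.Walk.support_reverse, List.mem_reverse] at this
      have hxw : x ≠ w := by
        intro h
        subst h
        have := hq.reverse.support_nodup
        rw [SimpleGraph.Walk.support_eq_cons q.reverse] at this
        exact (List.nodup_cons.mp this).1 hx2
      exact hxw (hshare x hxp hxq hxu)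

private lemma girth_le_cycle {x : V} (c : G.Walk x x) (hc : c.IsCycle) :
    G.girth ≤ c.length := by
  have h1 : G.egirth ≤ (c.length : ℕ∞) := le_egirth.mp le_rfl x c hc
  have := ENat.toNat_le_toNat h1 (by simp)
  simpa [SimpleGraph.girth] using this

private lemma girth_le_two_paths {u w : V} (p q : G.Walk u w)
    (hp : p.IsPath) (hq : q.IsPath) (hne : p ≠ q) :
    G.girth ≤ p.length + q.length := by
  obtain ⟨x, cc, hcc, hle⟩ := exists_cycle_le_of_two_paths' (p.length + q.length)
    p q hp hq hne le_rfl
  exact le_trans (girth_le_cycle cc hcc) hle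

end Aux

/-- Let `C` be a cycle of length `i`, `v` a vertex of `C` lying in `U`
(hence of degree `c`), and `l ≥ 1` with `i + 2l < 2g`. The number of vertices `z` off
`C` joined to `v` by a path of length `l` using no edge of `C` is
`(c−2)·(d−1)^⌈(l−1)/2⌉·(c−1)^⌊(l−1)/2⌋`. -/
theorem card_vertices_at_path_distance {V : Type*} [Fintype V] [DecidableEq V]
    (G : SimpleGraph V) [DecidableRel G.Adj]
    (U : Set V) (c d : ℕ) (hc : 2 ≤ c) (hd : 2 ≤ d)
    (hbip : ∀ ⦃u v : V⦄, G.Adj u v → (u ∈ U ↔ v ∉ U))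
    (hdegU : ∀ v ∈ U, G.degree v = c)
    (hdegW : ∀ v ∉ U, G.degree v = d)
    (hcyc : ¬ G.IsAcyclic) (g : ℕ) (hg : G.girth = g)
    (i l : ℕ) (v : V) (hv : v ∈ U)
    (C : G.Walk v v) (hC : C.IsCycle) (hCi : C.length = i)
    (hl : 1 ≤ l) (hil : i + 2 * l < 2 * g) :
    {z : V | z ∉ C.support ∧ ∃ p : G.Walk v z, p.IsPath ∧ p.length = l ∧
        ∀ e ∈ p.edges, e ∉ C.edges}.ncard
      = (c - 2) * (d - 1) ^ ((l - 1 + 1) / 2) * (c - 1) ^ ((l - 1) / 2) := by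
  obtain ⟨b, hvb, C₀, rfl⟩ : ∃ (b : V) (h : G.Adj v b) (C₀ : G.Walk b v),
      C = SimpleGraph.Walk.cons h C₀ := by
    cases C with
    | nil => exact absurd hC SimpleGraph.Walk.IsCycle.not_of_nil
    | cons h C₀ => exact ⟨_, h, C₀, rfl⟩
  obtain ⟨hC₀, hCe⟩ := (SimpleGraph.Walk.cons_isCycle_iff _ _).mp hC
  have hgi : g ≤ i := by rw [← hCi, ← hg]; exact girth_le_cycle _ hC
  have hlg : l < g := by omega
  have hi3 : 3 ≤ i := by rw [← hCi]; exact hC.three_le_length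
  have hC₀len : C₀.length + 1 = i := by
    rw [← hCi, SimpleGraph.Walk.length_cons]
  -- the finsets of paths of length n from z to v avoiding C's edges
  set F : ℕ → Finset (Σ z : V, G.Walk z v) := fun n =>
    (Finset.univ.sigma fun z : V => G.finsetWalkLength n z v).filter
      fun q => q.2.IsPath ∧ ∀ e ∈ q.2.edges, e ∉ (SimpleGraph.Walk.cons hvb C₀).edges
    with hF
  have hmemF : ∀ (n : ℕ) (q : Σ z : V, G.Walk z v), q ∈ F n ↔ q.2.length = n ∧
      q.2.IsPath ∧ ∀ e ∈ q.2.edges, e ∉ (SimpleGraph.Walk.cons hvb C₀).edges := by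
    intro n q
    simp [hF, Finset.mem_filter, Finset.mem_sigma, SimpleGraph.mem_finsetWalkLength_iff,
      and_comm]
  -- endpoints of paths in `F n` avoid the cycle
  have hoff : ∀ n, 1 ≤ n → n ≤ l → ∀ q ∈ F n,
      q.1 ∉ (SimpleGraph.Walk.cons hvb C₀).support := by
    rintro n hn1 hnl ⟨z, wzv⟩ hq hzC
    obtain ⟨hql, hqp, hqe⟩ := (hmemF n ⟨z, wzv⟩).mp hq
    simp only at hql hqp hqe hzC
    have hzv : z ≠ v := by
      rintro rfl
      rw [SimpleGraph.Walk.isPath_iff_eq_nil.mp hqp] at hql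
      simp at hql
      omega
    have hz₀ : z ∈ C₀.support := by
      rw [SimpleGraph.Walk.support_cons] at hzC
      rcases List.mem_cons.mp hzC with h | h
      · exact absurd h hzv
      · exact h
    have hpp : wzv.reverse.IsPath := hqp.reverse
    have hpl : wzv.reverse.length = n := by rw [SimpleGraph.Walk.length_reverse, hql]
    have hpe : ∀ e ∈ wzv.reverse.edges, e ∉ (SimpleGraph.Walk.cons hvb C₀).edges := by
      intro e he
      rw [SimpleGraph.Walk.edges_reverse, List.mem_reverse] at he
      exact hqe e he
    have htp : (C₀.takeUntil z hz₀).IsPath := hC₀.takeUntil hz₀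
    have hdp : (C₀.dropUntil z hz₀).IsPath := hC₀.dropUntil hz₀
    have hlensum : (C₀.takeUntil z hz₀).length + (C₀.dropUntil z hz₀).length = C₀.length := by
      have := congrArg SimpleGraph.Walk.length (C₀.take_spec hz₀)
      rwa [SimpleGraph.Walk.length_append] at this
    have hd1 : 1 ≤ (C₀.dropUntil z hz₀).length := Nat.one_le_iff_ne_zero.mpr
      (fun h => hzv (SimpleGraph.Walk.eq_of_length_eq_zero h))
    have hvnt : v ∉ (C₀.takeUntil z hz₀).support := by
      have hsplit : C₀.support
          = (C₀.takeUntil z hz₀).support ++ (C₀.dropUntil z hz₀).support.tail := by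
        conv_lhs => rw [← C₀.take_spec hz₀]
        rw [SimpleGraph.Walk.support_append]
      have hnodup := hC₀.support_nodup
      rw [hsplit, List.nodup_append] at hnodup
      intro hvt
      refine hnodup.2.2 v hvt v ?_ rfl
      have hvd : v ∈ (C₀.dropUntil z hz₀).support := SimpleGraph.Walk.end_mem_support _
      rw [SimpleGraph.Walk.support_eq_cons] at hvd
      rcases List.mem_cons.mp hvd with h | h
      · exact absurd h.symm hzv
      · exact h
    have ha1p : (SimpleGraph.Walk.cons hvb (C₀.takeUntil z hz₀)).IsPath :=
      (SimpleGraph.Walk.cons_isPath_iff _ _).mpr ⟨htp, hvnt⟩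
    have ha2p : (C₀.dropUntil z hz₀).reverse.IsPath := hdp.reverse
    have he2 : ∀ e ∈ (C₀.dropUntil z hz₀).reverse.edges,
        e ∈ (SimpleGraph.Walk.cons hvb C₀).edges := by
      intro e he
      rw [SimpleGraph.Walk.edges_reverse, List.mem_reverse] at he
      rw [SimpleGraph.Walk.edges_cons]
      exact List.mem_cons.mpr (Or.inr (C₀.edges_dropUntil_subset hz₀ he))
    have hne1 : wzv.reverse ≠ SimpleGraph.Walk.cons hvb (C₀.takeUntil z hz₀) := by
      intro h
      refine hpe s(v, b) ?_ ?_
      · rw [h, SimpleGraph.Walk.edges_cons]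
        exact List.mem_cons_self
      · rw [SimpleGraph.Walk.edges_cons]
        exact List.mem_cons_self
    have hne2 : wzv.reverse ≠ (C₀.dropUntil z hz₀).reverse := by
      intro h
      obtain ⟨e, he⟩ : ∃ e, e ∈ (C₀.dropUntil z hz₀).reverse.edges := by
        apply List.exists_mem_of_ne_nil
        intro h0
        have := congrArg List.length h0
        rw [SimpleGraph.Walk.length_edges, SimpleGraph.Walk.length_reverse] at this
        simp only [List.length_nil] at this
        omega
      exact hpe e (h ▸ he) (he2 e he)
    have hg1 : g ≤ wzv.reverse.length
        + (SimpleGraph.Walk.cons hvb (C₀.takeUntil z hz₀)).length := by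
      rw [← hg]
      exact girth_le_two_paths _ _ hpp ha1p hne1
    have hg2 : g ≤ wzv.reverse.length + (C₀.dropUntil z hz₀).reverse.length := by
      rw [← hg]
      exact girth_le_two_paths _ _ hpp ha2p hne2
    rw [SimpleGraph.Walk.length_cons, hpl] at hg1
    rw [SimpleGraph.Walk.length_reverse, SimpleGraph.Walk.length_reverse, hql] at hg2
    omega
  -- the endpoint determines the path
  have hinj : ∀ n, n ≤ l → ∀ q ∈ F n, ∀ q' ∈ F n, q.1 = q'.1 → q = q' := by
    rintro n hnl ⟨z, w⟩ hq ⟨z', w'⟩ hq' hzz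
    simp only at hzz
    subst hzz
    obtain ⟨hql, hqp, hqe⟩ := (hmemF n ⟨z, w⟩).mp hq
    obtain ⟨hql', hqp', hqe'⟩ := (hmemF n ⟨z, w'⟩).mp hq'
    simp only at hql hqp hqe hql' hqp' hqe'
    by_cases hww : w = w'
    · rw [hww]
    · exfalso
      have hne : w.reverse ≠ w'.reverse := by
        intro h
        apply hww
        have := congrArg SimpleGraph.Walk.reverse h
        rwa [SimpleGraph.Walk.reverse_reverse, SimpleGraph.Walk.reverse_reverse] at this
      have := girth_le_two_paths _ _ hqp.reverse hqp'.reverse hne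
      rw [hg, SimpleGraph.Walk.length_reverse, SimpleGraph.Walk.length_reverse,
        hql, hql'] at this
      omega
  -- base case
  have hbase : (F 1).card = c - 2 := by
    have hC₀rl : C₀.reverse.length ≠ 0 := by
      rw [SimpleGraph.Walk.length_reverse]
      omega
    obtain ⟨b', hvb', D, hD⟩ := walk_exists_cons C₀.reverse hC₀rl
    have hb'e : s(v, b') ∈ C₀.edges := by
      have : s(v, b') ∈ C₀.reverse.edges := by
        rw [hD, SimpleGraph.Walk.edges_cons]
        exact List.mem_cons_self
      rwa [SimpleGraph.Walk.edges_reverse, List.mem_reverse] at this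
    have hbb' : b ≠ b' := by
      rintro rfl
      exact hCe hb'e
    have hedge_iff : ∀ z : V, s(z, v) ∈ (SimpleGraph.Walk.cons hvb C₀).edges
        ↔ z = b ∨ z = b' := by
      intro z
      constructor
      · intro h
        rw [SimpleGraph.Walk.edges_cons] at h
        rcases List.mem_cons.mp h with h | h
        · rw [Sym2.eq_iff] at h
          rcases h with ⟨h1, h2⟩ | ⟨h1, h2⟩
          · exact absurd h2 hvb.ne
          · exact Or.inl h1
        · have h' : s(v, z) ∈ C₀.reverse.edges := by
            rw [SimpleGraph.Walk.edges_reverse, List.mem_reverse, Sym2.eq_swap]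
            exact h
          obtain ⟨hadj, r, hr⟩ := exists_cons_of_mem_edges C₀.reverse hC₀.reverse h'
          have hz : z = b' := by
            have h1 := congrArg (fun w => SimpleGraph.Walk.getVert w 1) (hr.symm.trans hD)
            simpa [SimpleGraph.Walk.getVert_cons_succ, SimpleGraph.Walk.getVert_zero] using h1
          exact Or.inr hz
      · rintro (rfl | rfl)
        · rw [SimpleGraph.Walk.edges_cons]
          exact List.mem_cons.mpr (Or.inl Sym2.eq_swap)
        · rw [SimpleGraph.Walk.edges_cons]
          refine List.mem_cons.mpr (Or.inr ?_)
          rw [Sym2.eq_swap]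
          exact hb'e
    have hsub : ({b, b'} : Finset V) ⊆ G.neighborFinset v := by
      intro x hx
      rcases Finset.mem_insert.mp hx with rfl | hx
      · rw [SimpleGraph.mem_neighborFinset]; exact hvb
      · rw [Finset.mem_singleton] at hx
        subst hx
        rw [SimpleGraph.mem_neighborFinset]; exact hvb'
    have hmain : (F 1).card = (G.neighborFinset v \ {b, b'}).card := by
      apply Finset.card_bij (fun q _ => q.1)
      · rintro ⟨z, w⟩ hq
        obtain ⟨hql, hqp, hqe⟩ := (hmemF 1 ⟨z, w⟩).mp hq
        simp only at hql hqp hqe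
        obtain ⟨hzadj, rfl⟩ := walk_length_one w hql
        rw [Finset.mem_sdiff]
        refine ⟨by rw [SimpleGraph.mem_neighborFinset]; exact hzadj.symm, ?_⟩
        intro hmem
        have hz2 : z = b ∨ z = b' := by
          simpa [Finset.mem_insert, Finset.mem_singleton] using hmem
        refine hqe s(z, v) (by simp) ((hedge_iff z).mpr hz2)
      · intro q hq q' hq' h
        exact hinj 1 hl q hq q' hq' h
      · intro z hz
        rw [Finset.mem_sdiff, SimpleGraph.mem_neighborFinset] at hz
        refine ⟨⟨z, SimpleGraph.Walk.cons hz.1.symm SimpleGraph.Walk.nil⟩, ?_, rfl⟩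
        rw [hmemF]
        refine ⟨by simp, by simp [SimpleGraph.Walk.cons_isPath_iff, hz.1.ne'], ?_⟩
        intro e he
        simp only [SimpleGraph.Walk.edges_cons, SimpleGraph.Walk.edges_nil,
          List.mem_singleton] at he
        subst he
        intro hmem
        rcases (hedge_iff z).mp hmem with rfl | rfl
        · exact hz.2 (by simp)
        · exact hz.2 (by simp)
    rw [hmain, Finset.card_sdiff_of_subset hsub, Finset.card_pair hbb',
      SimpleGraph.card_neighborFinset_eq_degree, hdegU v hv]
  -- inductive step
  have hstep : ∀ n, 1 ≤ n → n + 1 ≤ l →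
      (F (n + 1)).card = (if Even n then c - 1 else d - 1) * (F n).card := by
    intro n hn1 hnl
    have hmaps : ∀ q ∈ F (n + 1), stripWalk q ∈ F n := by
      rintro ⟨z', w⟩ hq
      obtain ⟨hql, hqp, hqe⟩ := (hmemF _ ⟨z', w⟩).mp hq
      simp only at hql hqp hqe
      cases w with
      | nil =>
        simp only [SimpleGraph.Walk.length_nil] at hql
        omega
      | cons h r =>
        rw [stripWalk_cons, hmemF]
        rw [SimpleGraph.Walk.length_cons] at hql
        exact ⟨show r.length = n by omega, ((SimpleGraph.Walk.cons_isPath_iff _ _).mp hqp).1,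
          fun e he => hqe e (by
            rw [SimpleGraph.Walk.edges_cons]
            exact List.mem_cons_of_mem _ he)⟩
    rw [Finset.card_eq_sum_card_fiberwise hmaps]
    have hfib : ∀ r ∈ F n, (Finset.filter (fun q => stripWalk q = r) (F (n + 1))).card
        = (if Even n then c - 1 else d - 1) := by
      rintro ⟨z, wz⟩ hr
      obtain ⟨hrl, hrp, hre⟩ := (hmemF n ⟨z, wz⟩).mp hr
      simp only at hrl hrp hre
      have hzoff : z ∉ (SimpleGraph.Walk.cons hvb C₀).support :=
        hoff n hn1 (by omega) ⟨z, wz⟩ hr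
      obtain ⟨y, hzy, w₀, rfl⟩ := walk_exists_cons wz (by omega)
      have hcard : (Finset.filter (fun q => stripWalk q = ⟨z, SimpleGraph.Walk.cons hzy w₀⟩)
          (F (n + 1))).card = ((G.neighborFinset z).erase y).card := by
        apply Finset.card_bij (fun q _ => q.1)
        · rintro ⟨z', w⟩ hq
          rw [Finset.mem_filter] at hq
          obtain ⟨hqF, hqs⟩ := hq
          obtain ⟨hql, hqp, hqe⟩ := (hmemF _ ⟨z', w⟩).mp hqF
          simp only at hql hqp hqe
          cases w with
          | nil =>
            simp only [SimpleGraph.Walk.length_nil] at hql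
            omega
          | cons h rr =>
            have hqs' : (⟨_, rr⟩ : Σ z : V, G.Walk z v)
                = ⟨z, SimpleGraph.Walk.cons hzy w₀⟩ := hqs
            injection hqs' with h1 h2
            subst h1
            have h2' := eq_of_heq h2
            subst h2'
            rw [Finset.mem_erase]
            refine ⟨?_, by rw [SimpleGraph.mem_neighborFinset]; exact h.symm⟩
            have hy : y ∈ (SimpleGraph.Walk.cons hzy w₀).support := by
              rw [SimpleGraph.Walk.support_cons]
              exact List.mem_cons_of_mem _ w₀.start_mem_support
            exact fun heq => ((SimpleGraph.Walk.cons_isPath_iff _ _).mp hqp).2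
              (by rw [show z' = y from heq]; exact hy)
        · intro q hq q' hq' hqq
          exact hinj (n + 1) hnl q (Finset.mem_filter.mp hq).1 q'
            (Finset.mem_filter.mp hq').1 hqq
        · intro z' hz'
          rw [Finset.mem_erase, SimpleGraph.mem_neighborFinset] at hz'
          obtain ⟨hz'y, hzz'⟩ := hz'
          have hz'sup : z' ∉ (SimpleGraph.Walk.cons hzy w₀).support := by
            intro hmem
            have hz'z : z' ≠ z := hzz'.ne'
            have hsingle : (SimpleGraph.Walk.cons hzy w₀).takeUntil z' hmem
                = SimpleGraph.Walk.cons hzz' SimpleGraph.Walk.nil := by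
              by_contra hne
              have hgle := girth_le_two_paths _ _ (hrp.takeUntil hmem)
                ((SimpleGraph.Walk.cons_isPath_iff _ _).mpr
                  ⟨SimpleGraph.Walk.IsPath.nil, by simp [hzz'.ne]⟩) hne
              rw [hg] at hgle
              have hta := SimpleGraph.Walk.length_takeUntil_le
                (SimpleGraph.Walk.cons hzy w₀) hmem
              rw [SimpleGraph.Walk.length_cons, SimpleGraph.Walk.length_nil] at hgle
              rw [hrl] at hta
              omega
            have hts := (SimpleGraph.Walk.cons hzy w₀).take_spec hmem
            rw [hsingle, SimpleGraph.Walk.cons_append, SimpleGraph.Walk.nil_append] at hts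
            have hzy' : z' = y := by
              have h1 := congrArg (fun w => SimpleGraph.Walk.getVert w 1) hts
              simpa [SimpleGraph.Walk.getVert_cons_succ,
                SimpleGraph.Walk.getVert_zero] using h1
            exact hz'y hzy'
          refine ⟨⟨z', SimpleGraph.Walk.cons hzz'.symm (SimpleGraph.Walk.cons hzy w₀)⟩,
            ?_, rfl⟩
          rw [Finset.mem_filter]
          refine ⟨?_, rfl⟩
          rw [hmemF]
          refine ⟨by rw [SimpleGraph.Walk.length_cons, hrl],
            (SimpleGraph.Walk.cons_isPath_iff _ _).mpr ⟨hrp, hz'sup⟩, ?_⟩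
          intro e he
          rw [SimpleGraph.Walk.edges_cons] at he
          rcases List.mem_cons.mp he with rfl | he
          · intro hmem
            exact hzoff (SimpleGraph.Walk.snd_mem_support_of_mem_edges _ hmem)
          · exact hre e he
      rw [hcard, Finset.card_erase_of_mem
        (by rw [SimpleGraph.mem_neighborFinset]; exact hzy),
        SimpleGraph.card_neighborFinset_eq_degree]
      have hpar : z ∈ U ↔ Even n := by
        have hpw := parity_walk hbip (SimpleGraph.Walk.cons hzy w₀)
        rw [hrl] at hpw
        tauto
      by_cases hev : Even n
      · rw [if_pos hev, hdegU z (hpar.mpr hev)]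
      · rw [if_neg hev, hdegW z (fun hzU => hev (hpar.mp hzU))]
    rw [Finset.sum_congr rfl hfib, Finset.sum_const, smul_eq_mul, mul_comm]
  -- the counting formula
  have hcount : ∀ n, 1 ≤ n → n ≤ l →
      (F n).card = (c - 2) * (d - 1) ^ (n / 2) * (c - 1) ^ ((n - 1) / 2) := by
    intro n
    induction n with
    | zero => intro h1 _; exact absurd h1 (by omega)
    | succ m ih =>
      intro _ h2
      by_cases hm : m = 0
      · subst hm
        simpa using hbase
      · have hm1 : 1 ≤ m := by omega
        rw [hstep m hm1 h2, ih hm1 (by omega)]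
        rcases Nat.even_or_odd m with hev | hod
        · obtain ⟨k, rfl⟩ := hev
          rw [if_pos ⟨k, rfl⟩]
          have hk1 : 1 ≤ k := by omega
          have e1 : (k + k) / 2 = k := by omega
          have e2 : (k + k - 1) / 2 = k - 1 := by omega
          have e3 : (k + k + 1) / 2 = k := by omega
          have e4 : (k + k + 1 - 1) / 2 = k := by omega
          rw [e1, e2, e3, e4]
          have e6 : (c - 1) ^ k = (c - 1) ^ (k - 1) * (c - 1) := by
            rw [← pow_succ]
            congr 1
            omega
          rw [e6]
          ring
        · obtain ⟨k, hk⟩ := hod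
          subst hk
          rw [if_neg (by simp [Nat.even_add_one, Nat.even_mul])]
          have e1 : (2 * k + 1) / 2 = k := by omega
          have e2 : (2 * k + 1 - 1) / 2 = k := by omega
          have e3 : (2 * k + 1 + 1) / 2 = k + 1 := by omega
          have e4 : (2 * k + 1 + 1 - 1) / 2 = k := by omega
          rw [e1, e2, e3, e4, pow_succ]
          ring
  -- wrap up
  have hseteq : {z : V | z ∉ (SimpleGraph.Walk.cons hvb C₀).support ∧
      ∃ p : G.Walk v z, p.IsPath ∧ p.length = l ∧
        ∀ e ∈ p.edges, e ∉ (SimpleGraph.Walk.cons hvb C₀).edges}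
      = ↑((F l).image Sigma.fst) := by
    ext z
    simp only [Set.mem_setOf_eq, Finset.coe_image, Set.mem_image, Finset.mem_coe]
    constructor
    · rintro ⟨hz, p, hp, hpl, hpe⟩
      refine ⟨⟨z, p.reverse⟩, ?_, rfl⟩
      rw [hmemF]
      refine ⟨by rw [SimpleGraph.Walk.length_reverse, hpl], hp.reverse, ?_⟩
      intro e he
      rw [SimpleGraph.Walk.edges_reverse, List.mem_reverse] at he
      exact hpe e he
    · rintro ⟨q, hq, rfl⟩
      obtain ⟨hql, hqp, hqe⟩ := (hmemF l q).mp hq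
      refine ⟨hoff l hl le_rfl q hq, q.2.reverse, hqp.reverse,
        by rw [SimpleGraph.Walk.length_reverse, hql], ?_⟩
      intro e he
      rw [SimpleGraph.Walk.edges_reverse, List.mem_reverse] at he
      exact hqe e he
  rw [hseteq, Set.ncard_coe_finset, Finset.card_image_of_injOn
    (fun q hq q' hq' h => hinj l le_rfl q hq q' hq' h), hcount l hl le_rfl,
    Nat.sub_add_cancel hl]
end
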